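/- The binary Generalized Means measure GM_r satisfies maximal agreement with constant 1 and minimal agreement with constant −1: for any binary confusion matrix with a0,a1,b0,b1 > 0, we have −1 ≤ GM_r ≤ 1; GM_r = 1 if and only if c10 = c01 = 0, and GM_r = −1 if and only if c11 = c00 = 0. -/

import Mathlib

set_option maxHeartbeats 800000

/-- The Generalized Means measure GM_r on a (real-cast) confusion matrix. -/
noncomputable def GM (r c11 c10 c01 c00 : ℝ) : ℝ :=
  ((c11 + c10 + c01 + c00) * c11 - (c11 + c10) * (c11 + c01)) /
    ((1 / 2) * ((c11 + c10) ^ r * (c01 + c00) ^ r +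
                (c11 + c01) ^ r * (c10 + c00) ^ r)) ^ (1 / r)

lemma powmean_ge_min (r : ℝ) (hr : r ≠ 0) {X Y : ℝ} (hX : 0 < X) (hY : 0 < Y) :
    min X Y ≤ ((1 / 2) * (X ^ r + Y ^ r)) ^ (1 / r) := by
  have hm : 0 < min X Y := lt_min hX hY
  rcases hr.lt_or_gt with h | h
  · have hXr : X ^ r ≤ (min X Y) ^ r :=
      Real.rpow_le_rpow_of_nonpos hm (min_le_left _ _) h.le
    have hYr : Y ^ r ≤ (min X Y) ^ r :=
      Real.rpow_le_rpow_of_nonpos hm (min_le_right _ _) h.le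
    have hsum : (1 / 2) * (X ^ r + Y ^ r) ≤ (min X Y) ^ r := by linarith
    have hpos : 0 < (1 / 2) * (X ^ r + Y ^ r) := by
      have := Real.rpow_pos_of_pos hX r
      have := Real.rpow_pos_of_pos hY r
      linarith
    have h1r : 1 / r ≤ 0 := by
      rw [one_div]; exact inv_nonpos.mpr h.le
    have := Real.rpow_le_rpow_of_nonpos hpos hsum h1r
    calc min X Y = ((min X Y) ^ r) ^ (1 / r) := by
          rw [one_div, Real.rpow_rpow_inv hm.le hr]
      _ ≤ _ := this
  · have hXr : (min X Y) ^ r ≤ X ^ r :=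
      Real.rpow_le_rpow hm.le (min_le_left _ _) h.le
    have hYr : (min X Y) ^ r ≤ Y ^ r :=
      Real.rpow_le_rpow hm.le (min_le_right _ _) h.le
    have hsum : (min X Y) ^ r ≤ (1 / 2) * (X ^ r + Y ^ r) := by linarith
    have h1r : 0 ≤ 1 / r := by positivity
    have := Real.rpow_le_rpow (Real.rpow_pos_of_pos hm r).le hsum h1r
    calc min X Y = ((min X Y) ^ r) ^ (1 / r) := by
          rw [one_div, Real.rpow_rpow_inv hm.le hr]
      _ ≤ _ := this

lemma aux1 {A B C E : ℝ} (hA0 : 0 ≤ A) (hB0 : 0 ≤ B) (hC0 : 0 ≤ C) (hE0 : 0 ≤ E)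
    (h : (A + B) * (C + E) = A * E - B * C) : A * C = 0 ∧ B * C = 0 ∧ B * E = 0 := by
  refine ⟨?_, ?_, ?_⟩ <;>
    nlinarith [mul_nonneg hA0 hC0, mul_nonneg hB0 hC0, mul_nonneg hB0 hE0]

lemma aux2 {A B C E : ℝ} (hA0 : 0 ≤ A) (hB0 : 0 ≤ B) (hC0 : 0 ≤ C) (hE0 : 0 ≤ E)
    (h : (A + C) * (B + E) = A * E - B * C) : A * B = 0 ∧ B * C = 0 ∧ C * E = 0 := by
  refine ⟨?_, ?_, ?_⟩ <;>
    nlinarith [mul_nonneg hA0 hB0, mul_nonneg hB0 hC0, mul_nonneg hC0 hE0]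

lemma aux3 {A B C E : ℝ} (hA0 : 0 ≤ A) (hB0 : 0 ≤ B) (hC0 : 0 ≤ C) (hE0 : 0 ≤ E)
    (h : (A + B) * (C + E) = -(A * E - B * C)) : A * C = 0 ∧ A * E = 0 ∧ B * E = 0 := by
  refine ⟨?_, ?_, ?_⟩ <;>
    nlinarith [mul_nonneg hA0 hC0, mul_nonneg hA0 hE0, mul_nonneg hB0 hE0]

lemma aux4 {A B C E : ℝ} (hA0 : 0 ≤ A) (hB0 : 0 ≤ B) (hC0 : 0 ≤ C) (hE0 : 0 ≤ E)
    (h : (A + C) * (B + E) = -(A * E - B * C)) : A * B = 0 ∧ A * E = 0 ∧ C * E = 0 := by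
  refine ⟨?_, ?_, ?_⟩ <;>
    nlinarith [mul_nonneg hA0 hB0, mul_nonneg hA0 hE0, mul_nonneg hC0 hE0]

lemma cast_mul_zero {m n : ℕ} (h : (m : ℝ) * (n : ℝ) = 0) : m = 0 ∨ n = 0 := by
  have : ((m * n : ℕ) : ℝ) = 0 := by push_cast; linarith
  have := Nat.cast_eq_zero.mp this
  exact Nat.mul_eq_zero.mp this

/-- GM_r satisfies maximal agreement with constant 1 and minimal agreement with
constant −1: for any binary confusion matrix of nonnegative integers with
a1, a0, b1, b0 > 0, we have −1 ≤ GM_r ≤ 1, GM_r = 1 iff c10 = c01 = 0, and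
GM_r = −1 iff c11 = c00 = 0. -/
theorem gm_max_min_agreement (r : ℝ) (hr : r ≠ 0) (c11 c10 c01 c00 : ℕ)
    (ha1 : 0 < c11 + c10) (ha0 : 0 < c01 + c00)
    (hb1 : 0 < c11 + c01) (hb0 : 0 < c10 + c00) :
    -1 ≤ GM r c11 c10 c01 c00 ∧
    GM r c11 c10 c01 c00 ≤ 1 ∧
    (GM r c11 c10 c01 c00 = 1 ↔ c10 = 0 ∧ c01 = 0) ∧
    (GM r c11 c10 c01 c00 = -1 ↔ c11 = 0 ∧ c00 = 0) := by
  set A : ℝ := (c11 : ℝ) with hA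
  set B : ℝ := (c10 : ℝ) with hB
  set C : ℝ := (c01 : ℝ) with hC
  set E : ℝ := (c00 : ℝ) with hE
  have hA0 : 0 ≤ A := Nat.cast_nonneg _
  have hB0 : 0 ≤ B := Nat.cast_nonneg _
  have hC0 : 0 ≤ C := Nat.cast_nonneg _
  have hE0 : 0 ≤ E := Nat.cast_nonneg _
  have ha1' : 0 < A + B := by rw [hA, hB]; exact_mod_cast ha1
  have ha0' : 0 < C + E := by rw [hC, hE]; exact_mod_cast ha0
  have hb1' : 0 < A + C := by rw [hA, hC]; exact_mod_cast hb1
  have hb0' : 0 < B + E := by rw [hB, hE]; exact_mod_cast hb0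
  set X : ℝ := (A + B) * (C + E) with hX
  set Y : ℝ := (A + C) * (B + E) with hY
  have hXpos : 0 < X := mul_pos ha1' ha0'
  have hYpos : 0 < Y := mul_pos hb1' hb0'
  set N : ℝ := A * E - B * C with hN
  have hNle : N ≤ min X Y := by
    apply le_min
    · rw [hN, hX]; nlinarith [mul_nonneg hA0 hC0, mul_nonneg hB0 hC0, mul_nonneg hB0 hE0]
    · rw [hN, hY]; nlinarith [mul_nonneg hA0 hB0, mul_nonneg hB0 hC0, mul_nonneg hC0 hE0]
  have hNge : -(min X Y) ≤ N := by
    rw [neg_le]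
    apply le_min
    · rw [hN, hX]; nlinarith [mul_nonneg hA0 hC0, mul_nonneg hA0 hE0, mul_nonneg hB0 hE0]
    · rw [hN, hY]; nlinarith [mul_nonneg hA0 hB0, mul_nonneg hA0 hE0, mul_nonneg hC0 hE0]
  set D : ℝ := ((1 / 2) * (X ^ r + Y ^ r)) ^ (1 / r) with hD
  have hDpos : 0 < D := by
    rw [hD]
    apply Real.rpow_pos_of_pos
    have := Real.rpow_pos_of_pos hXpos r
    have := Real.rpow_pos_of_pos hYpos r
    linarith
  have hGM : GM r c11 c10 c01 c00 = N / D := by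
    rw [GM, hD, hN, hX, hY]
    rw [← Real.mul_rpow ha1'.le ha0'.le, ← Real.mul_rpow hb1'.le hb0'.le]
    ring_nf
    rfl
  have hmin : min X Y ≤ D := powmean_ge_min r hr hXpos hYpos
  have hle : N ≤ D := hNle.trans hmin
  have hge : -D ≤ N := by linarith
  refine ⟨?_, ?_, ?_, ?_⟩
  · rw [hGM, neg_le, ← neg_div]; exact div_le_one_of_le₀ (by linarith) hDpos.le
  · rw [hGM]; exact div_le_one_of_le₀ hle hDpos.le
  · rw [hGM]
    constructor
    · intro h
      have hND : N = D := (div_eq_one_iff_eq hDpos.ne').mp h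
      have hNm : N = min X Y := le_antisymm hNle (by linarith)
      rcases min_cases X Y with ⟨hmeq, _⟩ | ⟨hmeq, _⟩
      · have hXN : X = N := hmeq ▸ hNm.symm
        rw [hX, hN] at hXN
        obtain ⟨e1, e2, e3⟩ := aux1 hA0 hB0 hC0 hE0 hXN
        rw [hA, hC] at e1; rw [hB, hC] at e2; rw [hB, hE] at e3
        have n1 := cast_mul_zero e1
        have n2 := cast_mul_zero e2
        have n3 := cast_mul_zero e3
        omega
      · have hYN : Y = N := hmeq ▸ hNm.symm
        rw [hY, hN] at hYN
        obtain ⟨e1, e2, e3⟩ := aux2 hA0 hB0 hC0 hE0 hYN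
        rw [hA, hB] at e1; rw [hB, hC] at e2; rw [hC, hE] at e3
        have n1 := cast_mul_zero e1
        have n2 := cast_mul_zero e2
        have n3 := cast_mul_zero e3
        omega
    · rintro ⟨h10, h01⟩
      have hB' : B = 0 := by rw [hB, h10]; simp
      have hC' : C = 0 := by rw [hC, h01]; simp
      have hApos : 0 < A := by rw [hB'] at ha1'; linarith
      have hEpos : 0 < E := by rw [hC'] at ha0'; linarith
      have hXeq : X = A * E := by rw [hX, hB', hC']; ring
      have hYeq : Y = A * E := by rw [hY, hB', hC']; ring
      have hNeq : N = A * E := by rw [hN, hB', hC']; ring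
      have hAE : 0 < A * E := mul_pos hApos hEpos
      have hDeq : D = A * E := by
        rw [hD, hXeq, hYeq]
        have h2 : (1 / 2 : ℝ) * ((A * E) ^ r + (A * E) ^ r) = (A * E) ^ r := by ring
        rw [h2, one_div, Real.rpow_rpow_inv hAE.le hr]
      rw [hNeq, hDeq, div_self hAE.ne']
  · rw [hGM]
    constructor
    · intro h
      have hND : N = -D := by
        have := (div_eq_iff hDpos.ne').mp h
        linarith
      have hNm : -N = min X Y := by
        have h1 : min X Y ≤ -N := by rw [hND]; simpa using hmin
        linarith
      rcases min_cases X Y with ⟨hmeq, _⟩ | ⟨hmeq, _⟩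
      · have hXN : X = -N := hmeq ▸ hNm.symm
        rw [hX, hN] at hXN
        obtain ⟨e1, e2, e3⟩ := aux3 hA0 hB0 hC0 hE0 hXN
        rw [hA, hC] at e1; rw [hA, hE] at e2; rw [hB, hE] at e3
        have n1 := cast_mul_zero e1
        have n2 := cast_mul_zero e2
        have n3 := cast_mul_zero e3
        omega
      · have hYN : Y = -N := hmeq ▸ hNm.symm
        rw [hY, hN] at hYN
        obtain ⟨e1, e2, e3⟩ := aux4 hA0 hB0 hC0 hE0 hYN
        rw [hA, hB] at e1; rw [hA, hE] at e2; rw [hC, hE] at e3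
        have n1 := cast_mul_zero e1
        have n2 := cast_mul_zero e2
        have n3 := cast_mul_zero e3
        omega
    · rintro ⟨h11, h00⟩
      have hA' : A = 0 := by rw [hA, h11]; simp
      have hE' : E = 0 := by rw [hE, h00]; simp
      have hBpos : 0 < B := by rw [hA'] at ha1'; linarith
      have hCpos : 0 < C := by rw [hE'] at ha0'; linarith
      have hXeq : X = B * C := by rw [hX, hA', hE']; ring
      have hYeq : Y = B * C := by rw [hY, hA', hE']; ring
      have hNeq : N = -(B * C) := by rw [hN, hA', hE']; ring
      have hBC : 0 < B * C := mul_pos hBpos hCpos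
      have hDeq : D = B * C := by
        rw [hD, hXeq, hYeq]
        have h2 : (1 / 2 : ℝ) * ((B * C) ^ r + (B * C) ^ r) = (B * C) ^ r := by ring
        rw [h2, one_div, Real.rpow_rpow_inv hBC.le hr]
      rw [hNeq, hDeq, neg_div, div_self hBC.ne']
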